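/- Let A and B be finite categories and suppose there is an adjunction F ⊣ G with F : A → B and G : B → A. If A has Euler characteristic and B has Euler characteristic, then χ(A) = χ(B). (Concretely: if k_• is a coweighting on A and l^• is a weighting on B, then ∑_a k_a = ∑_b l^b.) -/
import Mathlib

open CategoryTheory

/-- **Proposition 2.4(a)** (Leinster). If there is an adjunction `F ⊣ G`
between finite categories `A` and `B`, both having Euler characteristic, then
`χ(A) = χ(B)`: concretely, for a coweighting `k_•` on `A` and a weighting
`l^•` on `B`, `∑_a k_a = ∑_b l^b`. -/
theorem stmt_9 {A : Type u₁} [Category.{v₁} A] [Fintype A]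
    [∀ a b : A, Fintype (a ⟶ b)]
    {B : Type u₂} [Category.{v₂} B] [Fintype B]
    [∀ a b : B, Fintype (a ⟶ b)]
    (F : A ⥤ B) (G : B ⥤ A) (adj : F ⊣ G)
    -- `A` has Euler characteristic: a weighting and a coweighting on `A`
    (kA : A → ℚ) (hkA : ∀ a : A, ∑ b : A, (Fintype.card (a ⟶ b) : ℚ) * kA b = 1)
    (kA' : A → ℚ) (hkA' : ∀ b : A, ∑ a : A, kA' a * (Fintype.card (a ⟶ b) : ℚ) = 1)
    -- `B` has Euler characteristic: a weighting and a coweighting on `B`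
    (lB : B → ℚ) (hlB : ∀ a : B, ∑ b : B, (Fintype.card (a ⟶ b) : ℚ) * lB b = 1)
    (lB' : B → ℚ) (hlB' : ∀ b : B, ∑ a : B, lB' a * (Fintype.card (a ⟶ b) : ℚ) = 1) :
    ∑ a : A, kA' a = ∑ b : B, lB b := by
  have key : ∀ (a : A) (b : B),
      (Fintype.card (F.obj a ⟶ b) : ℚ) = (Fintype.card (a ⟶ G.obj b) : ℚ) := by
    intro a b
    exact_mod_cast Fintype.card_congr (adj.homEquiv a b)
  calc ∑ a : A, kA' a
      = ∑ a : A, kA' a * ∑ b : B, (Fintype.card (F.obj a ⟶ b) : ℚ) * lB b := by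
        simp [hlB]
    _ = ∑ b : B, (∑ a : A, kA' a * (Fintype.card (a ⟶ G.obj b) : ℚ)) * lB b := by
        simp only [Finset.mul_sum, Finset.sum_mul, key]
        rw [Finset.sum_comm]
        simp [mul_assoc]
    _ = ∑ b : B, lB b := by simp [hkA']
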